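/- Let A ∈ ℝ^{n×n} be symmetric, B ∈ ℝ^{n×m}, C ∈ ℝ^{p×n}, and assume ker A ⊆ ker C. Then s = 0 is a removable singularity of the rational matrix function S(s) = C(sI − A)⁻¹B, and its value at 0 (the limit of S(s) as s → 0 through points where sI − A is invertible) equals −CA⁺B, where A⁺ is the Moore–Penrose pseudoinverse of A. -/
import Mathlib


open Matrix Filter Topology Function
open scoped Kronecker

noncomputable section

/-- Complexification of a real matrix. -/
def cplx {α β : Type*} (M : Matrix α β ℝ) : Matrix α β ℂ := M.map Complex.ofReal

/-- Transfer function `S(s) = C (sI - A)⁻¹ B` of the system `ẋ = Ax + Bu, y = Cx`. -/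
def transfer {n m p : ℕ} (A : Matrix (Fin n) (Fin n) ℝ) (B : Matrix (Fin n) (Fin m) ℝ)
    (C : Matrix (Fin p) (Fin n) ℝ) (s : ℂ) : Matrix (Fin p) (Fin m) ℂ :=
  cplx C * (s • (1 : Matrix (Fin n) (Fin n) ℂ) - cplx A)⁻¹ * cplx B

/-- Squared H₂-norm: `(1/2π) ∫ tr(S(-iω)ᵀ S(iω)) dω`. -/
def H2normSq {α β : Type*} [Fintype α] [Fintype β] (S : ℂ → Matrix α β ℂ) : ℝ :=
  (1 / (2 * Real.pi)) *
    ∫ ω : ℝ, ((S (-((ω : ℂ) * Complex.I)))ᵀ * S ((ω : ℂ) * Complex.I)).trace.re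

/-- Largest singular value of a complex matrix (its ℓ²-operator norm). -/
def sigmaMax {α β : Type*} [Fintype α] [Fintype β] [DecidableEq β] (M : Matrix α β ℂ) : ℝ :=
  ‖LinearMap.toContinuousLinearMap (Matrix.toEuclideanLin M)‖

/-- Smallest singular value of a complex matrix: `√(λ_min(Mᴴ M))`. -/
def sigmaMinC {α β : Type*} [Fintype α] [Fintype β] [DecidableEq β] (M : Matrix α β ℂ) : ℝ :=
  Real.sqrt (sInf (spectrum ℝ (Mᴴ * M)))

/-- H∞-norm: `sup_{ω ∈ ℝ} σ_max(S(iω))`. -/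
def HinfNorm {α β : Type*} [Fintype α] [Fintype β] [DecidableEq β] (S : ℂ → Matrix α β ℂ) : ℝ :=
  ⨆ ω : ℝ, sigmaMax (S ((ω : ℂ) * Complex.I))

/-- Generalized unstable subspace `X₊(A)`: direct sum of the generalized eigenspaces of (the
complexification of) `A` corresponding to eigenvalues with nonnegative real part. -/
def unstableSubspace {n : ℕ} (A : Matrix (Fin n) (Fin n) ℝ) : Submodule ℂ (Fin n → ℂ) :=
  ⨆ μ ∈ {μ : ℂ | 0 ≤ μ.re}, Module.End.maxGenEigenspace (Matrix.toLin' (cplx A)) μ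

/-- A complex square matrix is Hurwitz if all its eigenvalues have negative real part. -/
def IsHurwitz {n : ℕ} (M : Matrix (Fin n) (Fin n) ℂ) : Prop :=
  ∀ μ ∈ spectrum ℂ M, μ.re < 0

/-- Transfer function `S_λ(s) = λ (sI - A + λB)⁻¹ E` of the auxiliary system. -/
def auxS {n r : ℕ} (A B : Matrix (Fin n) (Fin n) ℝ) (E : Matrix (Fin n) (Fin r) ℝ)
    (lam : ℝ) (s : ℂ) : Matrix (Fin n) (Fin r) ℂ :=
  (lam : ℂ) • ((s • (1 : Matrix (Fin n) (Fin n) ℂ) - cplx A + (lam : ℂ) • cplx B)⁻¹ * cplx E)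

/-- Transfer function `S(s) = (L⊗Iₙ)(sI - I_N⊗A + L⊗B)⁻¹(M⊗E)` of the original network. -/
def netS {N n r m : ℕ} (L : Matrix (Fin N) (Fin N) ℝ) (A B : Matrix (Fin n) (Fin n) ℝ)
    (E : Matrix (Fin n) (Fin r) ℝ) (M : Matrix (Fin N) (Fin m) ℝ) (s : ℂ) :
    Matrix (Fin N × Fin n) (Fin m × Fin r) ℂ :=
  cplx (L ⊗ₖ (1 : Matrix (Fin n) (Fin n) ℝ)) *
    (s • (1 : Matrix (Fin N × Fin n) (Fin N × Fin n) ℂ) -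
      cplx ((1 : Matrix (Fin N) (Fin N) ℝ) ⊗ₖ A - L ⊗ₖ B))⁻¹ *
    cplx (M ⊗ₖ E)

/-- Transfer function `Ŝ(s) = (LP⊗Iₙ)(sI - I_k⊗A + L̂⊗B)⁻¹(M̂⊗E)` of the reduced network. -/
def netShat {N n r m k : ℕ} (L : Matrix (Fin N) (Fin N) ℝ) (P : Matrix (Fin N) (Fin k) ℝ)
    (Lhat : Matrix (Fin k) (Fin k) ℝ) (Mhat : Matrix (Fin k) (Fin m) ℝ)
    (A B : Matrix (Fin n) (Fin n) ℝ) (E : Matrix (Fin n) (Fin r) ℝ) (s : ℂ) :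
    Matrix (Fin N × Fin n) (Fin m × Fin r) ℂ :=
  cplx ((L * P) ⊗ₖ (1 : Matrix (Fin n) (Fin n) ℝ)) *
    (s • (1 : Matrix (Fin k × Fin n) (Fin k × Fin n) ℂ) -
      cplx ((1 : Matrix (Fin k) (Fin k) ℝ) ⊗ₖ A - Lhat ⊗ₖ B))⁻¹ *
    cplx (Mhat ⊗ₖ E)

/-- Transfer function `S(s) = L (sI + L)⁻¹ M` of the single-integrator network. -/
def singleS {N m : ℕ} (L : Matrix (Fin N) (Fin N) ℝ) (M : Matrix (Fin N) (Fin m) ℝ)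
    (s : ℂ) : Matrix (Fin N) (Fin m) ℂ :=
  cplx L * (s • (1 : Matrix (Fin N) (Fin N) ℂ) + cplx L)⁻¹ * cplx M

/-- Transfer function `Ŝ(s) = LP (sI + L̂)⁻¹ M̂` of the reduced single-integrator network. -/
def singleShat {N m k : ℕ} (L : Matrix (Fin N) (Fin N) ℝ) (P : Matrix (Fin N) (Fin k) ℝ)
    (Lhat : Matrix (Fin k) (Fin k) ℝ) (Mhat : Matrix (Fin k) (Fin m) ℝ) (s : ℂ) :
    Matrix (Fin N) (Fin m) ℂ :=
  cplx (L * P) * (s • (1 : Matrix (Fin k) (Fin k) ℂ) + cplx Lhat)⁻¹ * cplx Mhat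

/-- Squared Frobenius norm `‖M‖_F² = tr(MᵀM)`. -/
def frobSq {α β : Type*} [Fintype α] [Fintype β] (M : Matrix α β ℝ) : ℝ := (Mᵀ * M).trace

end

lemma cplx_mul {α β γ : Type*} [Fintype β] (M : Matrix α β ℝ) (N : Matrix β γ ℝ) :
    cplx (M * N) = cplx M * cplx N :=
  Matrix.map_mul (f := Complex.ofRealHom)

lemma cplx_one {α : Type*} [Fintype α] [DecidableEq α] : cplx (1 : Matrix α α ℝ) = 1 :=
  Matrix.map_one _ Complex.ofRealHom.map_zero Complex.ofRealHom.map_one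

lemma cplx_sub {α β : Type*} (M N : Matrix α β ℝ) : cplx (M - N) = cplx M - cplx N :=
  Matrix.map_sub _ (fun a b => Complex.ofReal_sub a b) _ _

lemma cplx_neg {α β : Type*} (M : Matrix α β ℝ) : cplx (-M) = -cplx M := by
  ext i j; simp [cplx]

section RealIdents
variable {n m p : ℕ} (A : Matrix (Fin n) (Fin n) ℝ)

-- commutation of A and Ap
lemma comm_lemma (A Ap : Matrix (Fin n) (Fin n) ℝ) (hA : A.IsSymm)
    (hAp1 : A * Ap * A = A) (hAp3 : (A * Ap)ᵀ = A * Ap) (hAp4 : (Ap * A)ᵀ = Ap * A) :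
    A * Ap = Ap * A := by
  have hA' : Aᵀ = A := hA
  have e1 : Apᵀ * A = A * Ap := by
    have : (Apᵀ * A)ᵀ = A * Ap := by
      rw [Matrix.transpose_mul, Matrix.transpose_transpose, hA']
    calc Apᵀ * A = ((Apᵀ * A)ᵀ)ᵀ := by rw [Matrix.transpose_transpose]
      _ = (A * Ap)ᵀ := by rw [this]
      _ = A * Ap := hAp3
  have e2 : A * Apᵀ = Ap * A := by
    have : (A * Apᵀ)ᵀ = Ap * A := by
      rw [Matrix.transpose_mul, Matrix.transpose_transpose, hA']
    calc A * Apᵀ = ((A * Apᵀ)ᵀ)ᵀ := by rw [Matrix.transpose_transpose]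
      _ = (Ap * A)ᵀ := by rw [this]
      _ = Ap * A := hAp4
  have h1 : A * Ap = (A * Ap) * (Ap * A) := by
    calc A * Ap = Apᵀ * A := e1.symm
      _ = Apᵀ * (A * Ap * A) := by rw [hAp1]
      _ = (Apᵀ * A) * (Ap * A) := by rw [Matrix.mul_assoc, Matrix.mul_assoc]
      _ = (A * Ap) * (Ap * A) := by rw [e1]
  have h2 : Ap * A = (A * Ap) * (Ap * A) := by
    calc Ap * A = A * Apᵀ := e2.symm
      _ = (A * Ap * A) * Apᵀ := by rw [hAp1]
      _ = (A * Ap) * (A * Apᵀ) := by rw [Matrix.mul_assoc]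
      _ = (A * Ap) * (Ap * A) := by rw [e2]
  rw [h1, ← h2]

end RealIdents

lemma hC_lemma {n p : ℕ} (A Ap : Matrix (Fin n) (Fin n) ℝ) (C : Matrix (Fin p) (Fin n) ℝ)
    (hker : LinearMap.ker A.mulVecLin ≤ LinearMap.ker C.mulVecLin)
    (hAp1 : A * Ap * A = A) :
    C * (Ap * A) = C := by
  have key : A * (1 - Ap * A) = 0 := by
    rw [Matrix.mul_sub, Matrix.mul_one, ← Matrix.mul_assoc, hAp1, sub_self]
  have h0 : C * (1 - Ap * A) = 0 := by
    ext i j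
    have hv : ((1 - Ap * A) *ᵥ Pi.single j 1) ∈ LinearMap.ker A.mulVecLin := by
      simp only [LinearMap.mem_ker, Matrix.mulVecLin_apply, Matrix.mulVec_mulVec, key,
        Matrix.zero_mulVec]
    have := hker hv
    simp only [LinearMap.mem_ker, Matrix.mulVecLin_apply, Matrix.mulVec_mulVec] at this
    have h2 := congrFun this i
    simpa [Matrix.mulVec_single] using h2
  have h1 : C - C * (Ap * A) = 0 := by rw [← h0, Matrix.mul_sub, Matrix.mul_one]
  exact (sub_eq_zero.mp h1).symm

lemma key_alg {n m p : ℕ} (a g q : Matrix (Fin n) (Fin n) ℂ) (b : Matrix (Fin n) (Fin m) ℂ)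
    (c : Matrix (Fin p) (Fin n) ℂ)
    (hq : q = g * a) (hqa : q * a = a) (haq : a * q = a) (hgq : g * q = g) (hqq : q * q = q)
    (hcq : c * q = c) (s : ℂ)
    (hM : IsUnit (s • (1 : Matrix (Fin n) (Fin n) ℂ) - a))
    (hN : IsUnit (s • (1 : Matrix (Fin n) (Fin n) ℂ) - a + (1 - q))) :
    c * (s • (1 : Matrix (Fin n) (Fin n) ℂ) - a)⁻¹ * b =
      s • (c * (g * ((s • (1 : Matrix (Fin n) (Fin n) ℂ) - a + (1 - q))⁻¹ * (q * b))))
        - c * (g * b) := by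
  set M : Matrix (Fin n) (Fin n) ℂ := s • 1 - a with hMdef
  set N : Matrix (Fin n) (Fin n) ℂ := M + (1 - q) with hNdef
  have hMd : IsUnit M.det := (Matrix.isUnit_iff_isUnit_det M).mp hM
  have hNd : IsUnit N.det := (Matrix.isUnit_iff_isUnit_det N).mp hN
  have hMM : M * M⁻¹ = 1 := Matrix.mul_nonsing_inv M hMd
  have hMM' : M⁻¹ * M = 1 := Matrix.nonsing_inv_mul M hMd
  have hNN : N * N⁻¹ = 1 := Matrix.mul_nonsing_inv N hNd
  have hNN' : N⁻¹ * N = 1 := Matrix.nonsing_inv_mul N hNd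
  have haM : a * M⁻¹ = s • M⁻¹ - 1 := by
    have h := hMM
    rw [hMdef, Matrix.sub_mul, smul_mul_assoc, Matrix.one_mul] at h
    rw [eq_sub_iff_add_eq, ← h]; abel
  have hqM : q * M = M * q := by
    rw [hMdef, Matrix.mul_sub, Matrix.sub_mul, mul_smul_comm, smul_mul_assoc,
      Matrix.mul_one, Matrix.one_mul, hqa, haq]
  have hqMi : q * M⁻¹ = M⁻¹ * q := by
    calc q * M⁻¹ = (M⁻¹ * M) * (q * M⁻¹) := by rw [hMM', Matrix.one_mul]
      _ = M⁻¹ * ((M * q) * M⁻¹) := by rw [Matrix.mul_assoc, Matrix.mul_assoc]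
      _ = M⁻¹ * ((q * M) * M⁻¹) := by rw [hqM]
      _ = M⁻¹ * (q * (M * M⁻¹)) := by rw [Matrix.mul_assoc]
      _ = M⁻¹ * q := by rw [hMM, Matrix.mul_one]
  have hNq : N * q = M * q := by
    have h1 : (1 - q) * q = 0 := by rw [Matrix.sub_mul, Matrix.one_mul, hqq, sub_self]
    rw [hNdef, Matrix.add_mul, h1, add_zero]
  have hMN : M * N = N * M := by
    have h1 : M * (1 - q) = (1 - q) * M := by
      simp only [Matrix.mul_sub, Matrix.sub_mul, Matrix.mul_one, Matrix.one_mul, hqM]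
    rw [hNdef, Matrix.mul_add, Matrix.add_mul, h1]
  have hNiM : N⁻¹ * M = M * N⁻¹ := by
    calc N⁻¹ * M = (N⁻¹ * M) * (N * N⁻¹) := by rw [hNN, Matrix.mul_one]
      _ = N⁻¹ * ((M * N) * N⁻¹) := by simp only [Matrix.mul_assoc]
      _ = N⁻¹ * ((N * M) * N⁻¹) := by rw [hMN]
      _ = (N⁻¹ * N) * (M * N⁻¹) := by simp only [Matrix.mul_assoc]
      _ = M * N⁻¹ := by rw [hNN', Matrix.one_mul]
  have hMiq : M⁻¹ * q = N⁻¹ * q := by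
    calc M⁻¹ * q = M⁻¹ * (N⁻¹ * (N * q)) := by rw [← Matrix.mul_assoc N⁻¹ N q, hNN', Matrix.one_mul]
      _ = M⁻¹ * (N⁻¹ * (M * q)) := by rw [hNq]
      _ = M⁻¹ * ((N⁻¹ * M) * q) := by rw [Matrix.mul_assoc]
      _ = M⁻¹ * ((M * N⁻¹) * q) := by rw [hNiM]
      _ = (M⁻¹ * M) * (N⁻¹ * q) := by simp only [Matrix.mul_assoc]
      _ = N⁻¹ * q := by rw [hMM', Matrix.one_mul]
  have hgM : g * M⁻¹ = g * (N⁻¹ * q) := by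
    calc g * M⁻¹ = (g * q) * M⁻¹ := by rw [hgq]
      _ = g * (q * M⁻¹) := by rw [Matrix.mul_assoc]
      _ = g * (M⁻¹ * q) := by rw [hqMi]
      _ = g * (N⁻¹ * q) := by rw [hMiq]
  have hqMinv : q * M⁻¹ = s • (g * (N⁻¹ * q)) - g := by
    calc q * M⁻¹ = g * (a * M⁻¹) := by rw [hq, Matrix.mul_assoc]
      _ = g * (s • M⁻¹ - 1) := by rw [haM]
      _ = s • (g * M⁻¹) - g := by rw [Matrix.mul_sub, mul_smul_comm, Matrix.mul_one]
      _ = s • (g * (N⁻¹ * q)) - g := by rw [hgM]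
  calc c * M⁻¹ * b = ((c * q) * M⁻¹) * b := by rw [hcq]
    _ = (c * (q * M⁻¹)) * b := by simp only [Matrix.mul_assoc]
    _ = (c * (s • (g * (N⁻¹ * q)) - g)) * b := by rw [hqMinv]
    _ = s • (c * (g * (N⁻¹ * (q * b)))) - c * (g * b) := by
        rw [Matrix.mul_sub, Matrix.sub_mul, Matrix.mul_smul, Matrix.smul_mul]
        simp only [Matrix.mul_assoc]

/-- if `A` is symmetric and `ker A ⊆ ker C`, then `0` is a removable
singularity of `S(s) = C(sI − A)⁻¹B` and its value at `0` (the limit of `S(s)` as `s → 0`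
through points where `sI − A` is invertible) is `−CA⁺B`, `A⁺` being the Moore–Penrose
pseudoinverse of `A` (characterized by the four Penrose conditions). -/
theorem stmt3 {n m p : ℕ} (A : Matrix (Fin n) (Fin n) ℝ) (hA : A.IsSymm)
    (B : Matrix (Fin n) (Fin m) ℝ) (C : Matrix (Fin p) (Fin n) ℝ)
    (hker : LinearMap.ker A.mulVecLin ≤ LinearMap.ker C.mulVecLin)
    (Ap : Matrix (Fin n) (Fin n) ℝ)
    (hAp1 : A * Ap * A = A) (hAp2 : Ap * A * Ap = Ap)
    (hAp3 : (A * Ap)ᵀ = A * Ap) (hAp4 : (Ap * A)ᵀ = Ap * A) :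
    ∀ i j, Filter.Tendsto (fun s : ℂ => transfer A B C s i j)
      (nhdsWithin 0 {s : ℂ | IsUnit (s • (1 : Matrix (Fin n) (Fin n) ℂ) - cplx A)})
      (nhds (cplx (-(C * Ap * B)) i j)) := by
  -- real identities
  have hcomm : A * Ap = Ap * A := comm_lemma A Ap hA hAp1 hAp3 hAp4
  have R1 : C * (Ap * A) = C := hC_lemma A Ap C hker hAp1
  have R3 : Ap * (Ap * A) = Ap := by
    rw [← hcomm, ← Matrix.mul_assoc, hAp2]
  have R4 : A * (Ap * A) = A := by rw [← Matrix.mul_assoc, hAp1]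
  have R5 : (Ap * A) * A = A := by
    rw [← hcomm, hAp1]
  have R6 : (Ap * A) * (Ap * A) = Ap * A := by rw [Matrix.mul_assoc Ap A (Ap*A), R4]
  have R7 : (Ap * A) * Ap = Ap := hAp2
  -- complex matrices
  set a : Matrix (Fin n) (Fin n) ℂ := cplx A with ha
  set b : Matrix (Fin n) (Fin m) ℂ := cplx B with hb
  set c : Matrix (Fin p) (Fin n) ℂ := cplx C with hc
  set g : Matrix (Fin n) (Fin n) ℂ := cplx Ap with hg
  set q : Matrix (Fin n) (Fin n) ℂ := cplx Ap * cplx A with hqdef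
  have hqc : q = cplx (Ap * A) := (cplx_mul Ap A).symm
  have hag : a * q = a := by rw [hqc, ha, ← cplx_mul, R4]
  have hqa : q * a = a := by rw [hqc, ha, ← cplx_mul, R5]
  have hgq : g * q = g := by rw [hqc, hg, ← cplx_mul, R3]
  have hqq : q * q = q := by rw [hqc, ← cplx_mul, R6]
  have hcq : c * q = c := by rw [hqc, hc, ← cplx_mul, R1]
  have hqg : q * g = g := by rw [hqc, hg, ← cplx_mul, R7]
  have hagq : a * g = q := by
    rw [ha, hg, ← cplx_mul, hcomm, hqc]
  -- the auxiliary matrix family N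
  set Nf : ℂ → Matrix (Fin n) (Fin n) ℂ :=
    fun s => s • (1 : Matrix (Fin n) (Fin n) ℂ) - a + (1 - q) with hNf
  have hNf0 : Nf 0 = (1 - q) - a := by
    simp only [hNf, zero_smul, zero_sub]; abel
  have hu1 : ((1 - q) - a) * ((1 - q) - g) = 1 := by
    simp only [Matrix.sub_mul, Matrix.mul_sub, Matrix.mul_one, Matrix.one_mul,
      hqq, hqg, hag, hagq]
    abel
  have hu2 : ((1 - q) - g) * ((1 - q) - a) = 1 := by
    simp only [Matrix.sub_mul, Matrix.mul_sub, Matrix.mul_one, Matrix.one_mul,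
      hqq, hqa, hqg, hgq, hagq]
    abel
  have hN0 : IsUnit (Nf 0) := by
    rw [hNf0]
    exact ⟨⟨(1 - q) - a, (1 - q) - g, hu1, hu2⟩, rfl⟩
  have hNcont : Continuous Nf := by
    apply Continuous.add
    · exact (continuous_id.smul continuous_const).sub continuous_const
    · exact continuous_const
  have hdet0 : (Nf 0).det ≠ 0 := by
    have := (Matrix.isUnit_iff_isUnit_det _).mp hN0
    exact this.ne_zero
  have hev : ∀ᶠ s in 𝓝 (0 : ℂ), IsUnit (Nf s) := by
    have hc : ContinuousAt (fun s => (Nf s).det) 0 := (hNcont.matrix_det).continuousAt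
    filter_upwards [hc.eventually_ne hdet0] with s hs
    exact (Matrix.isUnit_iff_isUnit_det _).mpr (isUnit_iff_ne_zero.mpr hs)
  have hNinv : ContinuousAt (fun s => (Nf s)⁻¹) 0 := by
    have h1 : ContinuousAt Ring.inverse (Nf 0).det := by
      rw [Ring.inverse_eq_inv']
      exact continuousAt_inv₀ hdet0
    exact (continuousAt_matrix_inv (Nf 0) h1).comp hNcont.continuousAt
  -- the regular extension G
  set G : ℂ → Matrix (Fin p) (Fin m) ℂ :=
    fun s => s • (c * (g * ((Nf s)⁻¹ * (q * b)))) - c * (g * b) with hG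
  have hL : Continuous (fun X : Matrix (Fin n) (Fin n) ℂ => c * (g * (X * (q * b)))) :=
    continuous_const.matrix_mul (continuous_const.matrix_mul
      (continuous_id.matrix_mul continuous_const))
  have hGt : Tendsto G (𝓝 0) (𝓝 (-(c * (g * b)))) := by
    have h1 : Tendsto (fun s : ℂ => s • (c * (g * ((Nf s)⁻¹ * (q * b))))) (𝓝 0)
        (𝓝 ((0 : ℂ) • (c * (g * ((Nf 0)⁻¹ * (q * b)))))) :=
      Tendsto.smul tendsto_id (hL.continuousAt.comp hNinv)
    rw [zero_smul] at h1
    have h2 := h1.sub (tendsto_const_nhds (x := c * (g * b)))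
    rw [zero_sub] at h2
    exact h2
  -- transfer agrees with G near 0 within the unit set
  have hEq : (fun s : ℂ => transfer A B C s) =ᶠ[nhdsWithin 0
      {s : ℂ | IsUnit (s • (1 : Matrix (Fin n) (Fin n) ℂ) - cplx A)}] G := by
    filter_upwards [mem_nhdsWithin_of_mem_nhds hev, self_mem_nhdsWithin] with s hNs hMs
    have := key_alg a g q b c hqdef hqa hag hgq hqq hcq s hMs hNs
    simpa [transfer, hG, hNf, ← ha, ← hb, ← hc] using this
  have hval : cplx (-(C * Ap * B)) = -(c * (g * b)) := by
    rw [cplx_neg, cplx_mul, cplx_mul, hc, hg, hb, Matrix.mul_assoc]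
  have hT : Tendsto (fun s : ℂ => transfer A B C s)
      (nhdsWithin 0 {s : ℂ | IsUnit (s • (1 : Matrix (Fin n) (Fin n) ℂ) - cplx A)})
      (𝓝 (cplx (-(C * Ap * B)))) := by
    rw [hval]
    exact (hGt.mono_left nhdsWithin_le_nhds).congr' hEq.symm
  intro i j
  exact (((continuous_apply j).comp (continuous_apply i)).tendsto _).comp hT
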